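/- Let |b⟩ = |0⟩⊗F|0⟩. Then for every a ∈ [0..d-1]² with a ≠ (0,0), ⟨b| P_sym (T_a⊗T_a) |b⟩ = 1/(2d). Consequently the frame {√(2d/(d+1)) P_sym (T_a⊗T_a)|b⟩} is an equiangular tight frame on H_sym: distinct frame vectors have inner products of absolute value 1/(d+1). -/

import Mathlib

open Matrix Complex BigOperators

noncomputable def ww (d : ℕ) : ℂ := Complex.exp (2 * Real.pi * Complex.I / d)

noncomputable def tt (d : ℕ) : ℂ := Complex.exp (2 * Real.pi * Complex.I * (d + 1) / (2 * d))

/-- Displacement operator `T_a = τ^{a₁a₂} S^{a₁} C^{a₂}` as a concrete matrix. -/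
noncomputable def T (d : ℕ) (a : ℤ × ℤ) : Matrix (ZMod d) (ZMod d) ℂ :=
  Matrix.of fun i j => tt d ^ (a.1 * a.2) *
    (if i = j + (a.1 : ZMod d) then ww d ^ (a.2 * (j.val : ℤ)) else 0)

def fz {d : ℕ} (a : Fin d × Fin d) : ℤ × ℤ := (((a.1 : ℕ) : ℤ), ((a.2 : ℕ) : ℤ))

noncomputable def dotc {α : Type*} [Fintype α] (v w : α → ℂ) : ℂ := ∑ p, star (v p) * w p

/-- Orthogonal projection onto the symmetric subspace of `ℂ^d ⊗ ℂ^d`. -/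
noncomputable def Psym (d : ℕ) : Matrix (ZMod d × ZMod d) (ZMod d × ZMod d) ℂ :=
  Matrix.of fun p q => (1 / 2 : ℂ) * ((if p = q then 1 else 0) + (if p = (q.2, q.1) then 1 else 0))

/-- `T_a ⊗ T_a` -/
noncomputable def TT (d : ℕ) (a : ℤ × ℤ) : Matrix (ZMod d × ZMod d) (ZMod d × ZMod d) ℂ :=
  Matrix.kroneckerMap (· * ·) (T d a) (T d a)

/-- Discrete Fourier transform matrix. -/
noncomputable def Fdft (d : ℕ) : Matrix (ZMod d) (ZMod d) ℂ :=
  Matrix.of fun i j => ((1 / Real.sqrt d : ℝ) : ℂ) * ww d ^ (i.val * j.val)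

/-- The vector `|0⟩ ⊗ F|0⟩`. -/
noncomputable def b0 (d : ℕ) : ZMod d × ZMod d → ℂ :=
  fun p => (if p.1 = 0 then 1 else 0) * Fdft d p.2 0

/-- Partial trace over the first factor of `|v⟩⟨v|`. -/
noncomputable def ptrace1 (d : ℕ) [NeZero d] (v : ZMod d × ZMod d → ℂ) :
    Matrix (ZMod d) (ZMod d) ℂ :=
  Matrix.of fun j l => ∑ i, v (i, j) * star (v (i, l))

/-- tensor square of a vector -/
noncomputable def tp {d : ℕ} (f : ZMod d → ℂ) : ZMod d × ZMod d → ℂ :=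
  fun p => f p.1 * f p.2

/-- `b` is a fiducial vector of a WH-type basis. -/
def IsWHFiducial (d : ℕ) [NeZero d] (b : ZMod d × ZMod d → ℂ) : Prop :=
  dotc b b = 1 ∧ ∀ a : Fin d × Fin d, ((a.1 : ℕ), (a.2 : ℕ)) ≠ (0, 0) →
    dotc b ((TT d (fz a)).mulVec b) = 0

noncomputable def Cm (d : ℕ) : Matrix (ZMod d) (ZMod d) ℂ :=
  Matrix.of fun i j => if i = j then ww d ^ (i.val) else 0

noncomputable def Sm (d : ℕ) : Matrix (ZMod d) (ZMod d) ℂ :=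
  Matrix.of fun i j => if i = j + 1 then 1 else 0

/-- `(1/√2)(|j⟩|j+i⟩ ± |j+i⟩|j⟩)` (up to normalization), sign `s`. -/
noncomputable def symVec (d : ℕ) (i s : ℤ) (j : ZMod d) : ZMod d × ZMod d → ℂ :=
  fun p => (if p = (j, j + (i : ZMod d)) then 1 else 0) +
    (s : ℂ) * (if p = (j + (i : ZMod d), j) then 1 else 0)

/-- The invariant subspace `H_{±i}`. -/
noncomputable def Hsub (d : ℕ) (i s : ℤ) : Submodule ℂ (ZMod d × ZMod d → ℂ) :=
  Submodule.span ℂ (Set.range (symVec d i s))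

/-- The swap operator on `ℂ^d ⊗ ℂ^d`. -/
def swapL (d : ℕ) : (ZMod d × ZMod d → ℂ) →ₗ[ℂ] (ZMod d × ZMod d → ℂ) where
  toFun v := fun p => v (p.2, p.1)
  map_add' _ _ := rfl
  map_smul' _ _ := rfl

/-- `H_t` for `t ∈ [-(d-1)/2 .. (d-1)/2]` (d odd). -/
noncomputable def Hodd (d : ℕ) (t : ℤ) : Submodule ℂ (ZMod d × ZMod d → ℂ) :=
  if 0 ≤ t then Hsub d t 1 else Hsub d (-t) (-1)


section Helpers
variable (d : ℕ) [NeZero d]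
set_option linter.unusedSectionVars false



lemma ww_ne : ww d ≠ 0 := Complex.exp_ne_zero _
lemma tt_ne : tt d ≠ 0 := Complex.exp_ne_zero _

lemma prim : IsPrimitiveRoot (ww d) d := Complex.isPrimitiveRoot_exp d (NeZero.ne d)

lemma ww_abs : ‖ww d‖ = 1 := by
  have : (2 * Real.pi * Complex.I / d) = ((2 * Real.pi / d : ℝ) : ℂ) * Complex.I := by
    push_cast; ring
  rw [ww, this, Complex.norm_exp_ofReal_mul_I]

lemma tt_abs : ‖tt d‖ = 1 := by
  have : (2 * Real.pi * Complex.I * (d+1) / (2*d)) = ((2 * Real.pi * (d+1) / (2*d) : ℝ) : ℂ) * Complex.I := by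
    push_cast; ring
  rw [tt, this, Complex.norm_exp_ofReal_mul_I]

lemma conj_ww : (starRingEnd ℂ) (ww d) = (ww d)⁻¹ :=
  (Complex.inv_eq_conj (ww_abs d)).symm

lemma conj_tt : (starRingEnd ℂ) (tt d) = (tt d)⁻¹ :=
  (Complex.inv_eq_conj (tt_abs d)).symm

lemma ww_zpow_one {k : ℤ} (h : (d:ℤ) ∣ k) : ww d ^ k = 1 :=
  ((prim d).zpow_eq_one_iff_dvd k).2 h

lemma tt_sq : tt d ^ 2 = ww d ^ ((d:ℤ) + 1) := by
  have hd : (d:ℂ) ≠ 0 := Nat.cast_ne_zero.2 (NeZero.ne d)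
  rw [tt, ww, ← Complex.exp_nat_mul]
  rw [show ((d:ℤ)+1 : ℤ) = ((d+1 : ℕ) : ℤ) by push_cast; ring]
  rw [zpow_natCast, ← Complex.exp_nat_mul]
  congr 1
  push_cast
  field_simp

lemma geom (k : ℤ) (hk : ¬ (d:ℤ) ∣ k) :
    ∑ j : ZMod d, ww d ^ (k * (j.val : ℤ)) = 0 := by
  have h1 : ∑ j : ZMod d, ww d ^ (k * (j.val : ℤ))
      = ∑ i ∈ Finset.range d, (ww d ^ k) ^ i := by
    refine Finset.sum_nbij' (fun j => j.val) (fun i => (i : ZMod d)) ?_ ?_ ?_ ?_ ?_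
    · intro j _; exact Finset.mem_range.2 (ZMod.val_lt j)
    · intro i _; exact Finset.mem_univ _
    · intro j _; exact ZMod.natCast_zmod_val j
    · intro i hi; exact ZMod.val_cast_of_lt (Finset.mem_range.1 hi)
    · intro j _
      rw [_root_.zpow_mul, zpow_natCast]
  rw [h1]
  have hz1 : (ww d ^ k) ≠ 1 := by
    intro h; exact hk (((prim d).zpow_eq_one_iff_dvd k).1 h)
  rw [geom_sum_eq hz1]
  have : (ww d ^ k) ^ d = 1 := by
    rw [← zpow_natCast, ← _root_.zpow_mul, mul_comm, _root_.zpow_mul, zpow_natCast,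
      (prim d).pow_eq_one, _root_.one_zpow]
  rw [this]; simp

lemma geom_shift (k : ℤ) (c : ZMod d) (hk : ¬ (d:ℤ) ∣ k) :
    ∑ j : ZMod d, ww d ^ (k * (((j - c) : ZMod d).val : ℤ)) = 0 := by
  rw [← geom d k hk]
  exact Fintype.sum_equiv (Equiv.subRight c) _ _ (fun j => rfl)



lemma Psym_mulVec (v : ZMod d × ZMod d → ℂ) (p : ZMod d × ZMod d) :
    (Psym d).mulVec v p = (1/2) * (v p + v (p.2, p.1)) := by
  unfold Psym
  simp only [Matrix.mulVec, dotProduct, Matrix.of_apply, mul_assoc]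
  rw [← Finset.mul_sum]
  congr 1
  rw [Fintype.sum_prod_type]
  simp only [add_mul, ite_mul, one_mul, zero_mul, Finset.sum_add_distrib]
  congr 1
  · simp [Prod.ext_iff, ite_and, Finset.sum_ite_eq, Finset.sum_ite_eq']
  · simp [Prod.ext_iff, ite_and, Finset.sum_ite_eq, Finset.sum_ite_eq']

lemma TT_mulVec_b0 (a : ℤ × ℤ) (p : ZMod d × ZMod d) :
    (TT d a).mulVec (b0 d) p =
      ((Real.sqrt d : ℝ) : ℂ)⁻¹ * (tt d ^ (a.1*a.2))^2 *
        ((if p.1 = (a.1 : ZMod d) then 1 else 0) *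
          ww d ^ (a.2 * ((((p.2 - a.1) : ZMod d)).val : ℤ))) := by
  unfold TT T b0 Fdft
  simp only [Matrix.mulVec, dotProduct, Matrix.kroneckerMap_apply, Matrix.of_apply]
  rw [Fintype.sum_prod_type]
  simp only [ZMod.val_zero, mul_zero, pow_zero, mul_one, ← sub_eq_iff_eq_add]
  simp only [ite_mul, mul_ite, mul_zero, zero_mul, one_mul, Finset.sum_ite_eq,
    Finset.sum_ite_eq', Finset.mem_univ, if_true, Finset.sum_ite_irrel, Finset.sum_const_zero]
  simp only [sub_eq_zero]
  split
  · simp only [ZMod.val_zero, Nat.cast_zero, mul_zero, zpow_zero, mul_one, one_div,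
      Complex.ofReal_inv]
    ring
  · rfl

end Helpers

section Main
variable (d : ℕ) [NeZero d]
set_option linter.unusedSectionVars false

lemma zpow_sq (x : ℂ) (z : ℤ) : (x ^ z)^2 = (x^2) ^ z := by
  rw [← zpow_natCast (x ^ z) 2, ← _root_.zpow_mul, mul_comm, _root_.zpow_mul, zpow_natCast]

lemma phase_one (a1 a2 : ℕ) (h1 : a1 < d) :
    (tt d ^ ((a1:ℤ) * (a2:ℤ)))^2 * ww d ^ ((a2:ℤ) * (((-((a1:ℕ) : ZMod d)).val : ℕ) : ℤ)) = 1 := by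
  rcases Nat.eq_zero_or_pos a1 with h | h
  · subst h; simp
  · have hne : ((a1 : ℕ) : ZMod d) ≠ 0 := by
      rw [Ne, ZMod.natCast_eq_zero_iff]
      exact Nat.not_dvd_of_pos_of_lt h h1
    rw [ZMod.neg_val, if_neg hne, ZMod.val_cast_of_lt h1]
    rw [zpow_sq, tt_sq, ← _root_.zpow_mul, ← zpow_add₀ (ww_ne d)]
    apply ww_zpow_one
    refine ⟨(a1:ℤ) * a2 + a2, ?_⟩
    have : ((d - a1 : ℕ) : ℤ) = (d:ℤ) - a1 := by
      rw [Nat.cast_sub h1.le]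
    rw [this]; ring

end Main

lemma sqrtd_mul (d : ℕ) : ((Real.sqrt d : ℝ) : ℂ) * ((Real.sqrt d : ℝ) : ℂ) = (d:ℂ) := by
  rw [← Complex.ofReal_mul, Real.mul_self_sqrt (by positivity)]
  simp

section K1
variable (d : ℕ) [NeZero d]
set_option linter.unusedSectionVars false

lemma key1 (a1 a2 : ℕ) (h1 : a1 < d) (h2 : a2 < d) (h : ¬(a1 = 0 ∧ a2 = 0)) :
    dotc (b0 d) ((Psym d).mulVec ((TT d ((a1:ℤ),(a2:ℤ))).mulVec (b0 d))) = 1/(2*(d:ℂ)) := by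
  have hd0 : (0:ℝ) < d := by exact_mod_cast Nat.pos_of_ne_zero (NeZero.ne d)
  have hdc : (d:ℂ) ≠ 0 := Nat.cast_ne_zero.mpr (NeZero.ne d)
  have hs0 : ((Real.sqrt d : ℝ) : ℂ) ≠ 0 :=
    Complex.ofReal_ne_zero.mpr (ne_of_gt (Real.sqrt_pos.mpr hd0))
  unfold dotc
  simp only [Psym_mulVec, TT_mulVec_b0, b0, Fdft, Matrix.of_apply, ZMod.val_zero,
    Nat.mul_zero, mul_zero, pow_zero, mul_one, star_mul', star_one, star_zero, apply_ite,
    Complex.star_def, Complex.conj_ofReal, Int.cast_natCast]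
  rw [Fintype.sum_prod_type]
  simp only [ite_mul, mul_ite, zero_mul, one_mul, mul_zero, Finset.sum_ite_irrel,
    Finset.sum_const_zero, Finset.sum_ite_eq', Finset.sum_ite_eq, Finset.mem_univ, if_true]
  simp only [← Finset.mul_sum, Finset.sum_add_distrib, Finset.sum_ite_irrel,
    Finset.sum_const_zero, Finset.sum_ite_eq', Finset.sum_ite_eq, Finset.mem_univ, if_true]
  by_cases ha : a1 = 0
  · subst ha
    have ha2 : ¬ (d:ℤ) ∣ (a2:ℤ) := by
      rw [Int.natCast_dvd_natCast]
      exact Nat.not_dvd_of_pos_of_lt (Nat.pos_of_ne_zero (fun hh => h ⟨rfl, hh⟩)) h2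
    simp only [Nat.cast_zero, Int.cast_zero, sub_zero, zero_mul, Int.zero_mul, zpow_zero,
      one_pow, mul_one, if_pos rfl, zero_sub, neg_zero, ZMod.val_zero, mul_zero]
    rw [if_pos trivial, geom d (a2:ℤ) ha2, mul_zero, zero_add]
    rw [Complex.ofReal_div, Complex.ofReal_one]
    field_simp [hdc]
    linear_combination (-1:ℂ) * sqrtd_mul d
  · have hne : ((a1 : ℕ) : ZMod d) ≠ 0 := by
      rw [Ne, ZMod.natCast_eq_zero_iff]
      exact Nat.not_dvd_of_pos_of_lt (Nat.pos_of_ne_zero ha) h1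
    rw [if_neg (by simpa using fun hh => hne hh.symm)]
    rw [zero_add, zero_sub, mul_assoc ((Real.sqrt d : ℝ) : ℂ)⁻¹, phase_one d a1 a2 h1, mul_one]
    rw [Complex.ofReal_div, Complex.ofReal_one]
    field_simp [hdc]
    linear_combination (-1:ℂ) * sqrtd_mul d

end K1

section K2
variable (d : ℕ) [NeZero d]
set_option linter.unusedSectionVars false
set_option maxHeartbeats 1000000

lemma key2 (a1 a2 b1 b2 : ℕ) (ha1 : a1 < d) (ha2 : a2 < d) (hb1 : b1 < d) (hb2 : b2 < d)
    (hne : ¬(a1 = b1 ∧ a2 = b2)) :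
    ‖dotc ((Psym d).mulVec ((TT d ((a1:ℤ),(a2:ℤ))).mulVec (b0 d)))
      ((Psym d).mulVec ((TT d ((b1:ℤ),(b2:ℤ))).mulVec (b0 d)))‖ = 1/(2*(d:ℝ)) := by
  unfold dotc
  simp only [Psym_mulVec, TT_mulVec_b0, Int.cast_natCast, Complex.star_def]
  rw [Fintype.sum_prod_type]
  simp only [mul_add, add_mul, ite_mul, mul_ite, mul_zero, zero_mul, mul_one, one_mul,
    Finset.sum_add_distrib, Finset.sum_ite_irrel, Finset.sum_const_zero, Finset.sum_ite_eq',
    Finset.sum_ite_eq, Finset.mem_univ, if_true]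
  simp only [map_add, _root_.map_mul, map_div₀, _root_.map_one, map_ofNat, map_inv₀, map_pow,
    map_zpow₀, apply_ite (starRingEnd ℂ), map_zero, Complex.conj_ofReal, conj_tt, conj_ww,
    _root_.inv_zpow, ← _root_.zpow_neg]
  simp only [add_mul, ite_mul, zero_mul, Finset.sum_add_distrib, Finset.sum_ite_irrel,
    Finset.sum_const_zero, Finset.sum_ite_eq', Finset.mem_univ, if_true]
  have hd0 : (0:ℝ) < d := by exact_mod_cast Nat.pos_of_ne_zero (NeZero.ne d)
  have hss : Real.sqrt d * Real.sqrt d = (d:ℝ) := Real.mul_self_sqrt (by positivity)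
  have hs0 : Real.sqrt d ≠ 0 := ne_of_gt (Real.sqrt_pos.mpr hd0)
  by_cases hab : a1 = b1
  · subst hab
    have hb2a2 : a2 ≠ b2 := fun h2 => hne ⟨rfl, h2⟩
    have hk : ¬ (d:ℤ) ∣ ((b2:ℤ) - a2) := by
      intro hdvd
      have h0 : ((b2:ℤ) - a2) = 0 := Int.eq_zero_of_abs_lt_dvd hdvd (by
        rw [abs_sub_lt_iff]; constructor <;> omega)
      omega
    have hterm : ∀ x : ZMod d,
        1 / 2 * ((↑(Real.sqrt d) : ℂ)⁻¹ * (tt d ^ (-((a1:ℤ) * (a2:ℤ)))) ^ 2 *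
            ww d ^ (-((a2:ℤ) * ((x - ((a1:ℕ) : ZMod d)).val : ℤ)))) *
          (1 / 2 * ((↑(Real.sqrt d) : ℂ)⁻¹ * (tt d ^ ((a1:ℤ) * (b2:ℤ))) ^ 2 *
            ww d ^ ((b2:ℤ) * ((x - ((a1:ℕ) : ZMod d)).val : ℤ)))) =
          (1 / 4 * (↑(Real.sqrt d) : ℂ)⁻¹ * (↑(Real.sqrt d) : ℂ)⁻¹ *
            (tt d ^ (-((a1:ℤ) * (a2:ℤ)))) ^ 2 * (tt d ^ ((a1:ℤ) * (b2:ℤ))) ^ 2) *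
            ww d ^ (((b2:ℤ) - (a2:ℤ)) * ((x - ((a1:ℕ) : ZMod d)).val : ℤ)) := by
      intro x
      rw [show (((b2:ℤ) - a2) * ((x - ((a1:ℕ) : ZMod d)).val : ℤ))
          = -((a2:ℤ) * ((x - ((a1:ℕ) : ZMod d)).val : ℤ))
            + (b2:ℤ) * ((x - ((a1:ℕ) : ZMod d)).val : ℤ) by ring]
      rw [zpow_add₀ (ww_ne d)]
      ring
    rw [if_pos rfl, Finset.sum_congr rfl (fun x _ => hterm x), ← Finset.mul_sum,
      geom_shift d ((b2:ℤ) - a2) _ hk, mul_zero]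
    rw [zero_add, add_zero, ← two_mul]
    simp only [norm_mul, norm_pow, norm_zpow, norm_inv, norm_div, norm_one,
      Complex.norm_real, Real.norm_eq_abs, tt_abs, ww_abs, _root_.one_zpow, one_pow, mul_one,
      one_mul, Complex.norm_two]
    rw [_root_.abs_of_nonneg (Real.sqrt_nonneg _)]
    field_simp
    linear_combination (-1:ℝ) * hss
  · have hcast : ¬ ((b1:ℕ) : ZMod d) = ((a1:ℕ) : ZMod d) := by
      intro hh
      apply hab
      have := congrArg ZMod.val hh
      rwa [ZMod.val_cast_of_lt hb1, ZMod.val_cast_of_lt ha1, eq_comm] at this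
    simp only [if_neg hcast]
    rw [zero_add, add_zero, ← two_mul]
    simp only [norm_mul, norm_pow, norm_zpow, norm_inv, norm_div, norm_one,
      Complex.norm_real, Real.norm_eq_abs, tt_abs, ww_abs, _root_.one_zpow, one_pow, mul_one,
      one_mul, Complex.norm_two]
    rw [_root_.abs_of_nonneg (Real.sqrt_nonneg _)]
    field_simp
    linear_combination (-1:ℝ) * hss

end K2

lemma dotc_smul (d : ℕ) [NeZero d] (u v : ZMod d × ZMod d → ℂ) (r : ℝ) :
    dotc ((r:ℂ) • u) ((r:ℂ) • v) = ((r^2 : ℝ) : ℂ) * dotc u v := by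
  unfold dotc
  rw [Finset.mul_sum]
  refine Finset.sum_congr rfl (fun p _ => ?_)
  simp only [Pi.smul_apply, smul_eq_mul, star_mul', Complex.star_def, Complex.conj_ofReal]
  push_cast
  ring

theorem stmt15 (d : ℕ) [NeZero d] :
    (∀ a : Fin d × Fin d, ((a.1 : ℕ), (a.2 : ℕ)) ≠ (0, 0) →
      dotc (b0 d) ((Psym d).mulVec ((TT d (fz a)).mulVec (b0 d))) = 1 / (2 * (d : ℂ))) ∧
    (let w : Fin d × Fin d → ZMod d × ZMod d → ℂ := fun a =>
        ((Real.sqrt (2 * d / ((d : ℝ) + 1)) : ℝ) : ℂ) •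
          (Psym d).mulVec ((TT d (fz a)).mulVec (b0 d))
     ∀ a a' : Fin d × Fin d, a ≠ a' →
       ‖dotc (w a) (w a')‖ = 1 / ((d : ℝ) + 1)) := by
  have hd0 : (0:ℝ) < d := by exact_mod_cast Nat.pos_of_ne_zero (NeZero.ne d)
  constructor
  · intro a ha
    have h' : ¬((a.1 : ℕ) = 0 ∧ (a.2 : ℕ) = 0) := by
      intro ⟨h1, h2⟩; exact ha (by rw [h1, h2])
    exact key1 d a.1 a.2 a.1.isLt a.2.isLt h'
  · intro w a a' haa
    have h' : ¬((a.1 : ℕ) = (a'.1 : ℕ) ∧ (a.2 : ℕ) = (a'.2 : ℕ)) := by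
      intro ⟨h1, h2⟩
      exact haa (Prod.ext (Fin.ext h1) (Fin.ext h2))
    have hk2 := key2 d a.1 a.2 a'.1 a'.2 a.1.isLt a.2.isLt a'.1.isLt a'.2.isLt h'
    show ‖dotc (((Real.sqrt (2 * d / ((d:ℝ) + 1)) : ℝ) : ℂ) • _)
      (((Real.sqrt (2 * d / ((d:ℝ) + 1)) : ℝ) : ℂ) • _)‖ = _
    rw [dotc_smul, norm_mul, Complex.norm_real, Real.norm_eq_abs,
      _root_.abs_of_nonneg (sq_nonneg _), Real.sq_sqrt (by positivity)]
    rw [show (fz a : ℤ × ℤ) = (((a.1 : ℕ) : ℤ), ((a.2 : ℕ) : ℤ)) from rfl,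
      show (fz a' : ℤ × ℤ) = (((a'.1 : ℕ) : ℤ), ((a'.2 : ℕ) : ℤ)) from rfl, hk2]
    field_simp
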